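/- Let A be an r×r Hermitian positive semidefinite matrix and E an r×r Hermitian matrix with operator norm ‖E‖ ≤ ε such that A + E is positive semidefinite. Then |log det(I + A + E) − log det(I + A)| ≤ r·log(1 + ε). -/

import Mathlib

open Matrix ComplexOrder

/-- The determinant of a Hermitian complex matrix is real. -/
lemma herm_det_ofReal {r : ℕ} {M : Matrix (Fin r) (Fin r) ℂ} (hM : M.IsHermitian) :
    M.det = (M.det.re : ℂ) := by
  rw [hM.det_eq_prod_eigenvalues]
  norm_cast

/-- `det (1 + M) ≥ 1` for positive semidefinite `M`. -/
lemma one_le_det_re {r : ℕ} {M : Matrix (Fin r) (Fin r) ℂ} (hM : M.PosSemidef) :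
    1 ≤ (1 + M).det.re := by
  have h1 : (1 + M).IsHermitian := Matrix.isHermitian_one.add hM.1
  have key : ∀ i, 1 ≤ h1.eigenvalues i := by
    intro i
    rw [h1.eigenvalues_eq]
    set w := h1.eigenvectorBasis i with hw
    have hvv : dotProduct (star w.ofLp) w.ofLp
        = inner ℂ w w := by rw [EuclideanSpace.inner_eq_star_dotProduct, dotProduct_comm]
    have h2 : (1 + M) *ᵥ w.ofLp =
        w.ofLp + M *ᵥ w.ofLp := by
      rw [Matrix.add_mulVec, Matrix.one_mulVec]
    rw [h2, dotProduct_add, map_add, hvv]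
    have h3 : RCLike.re (inner ℂ w w : ℂ) = 1 := by
      rw [inner_self_eq_norm_sq]
      simp [hw, h1.eigenvectorBasis.orthonormal.1 i]
    rw [h3]
    have := hM.re_dotProduct_nonneg w.ofLp
    linarith
  rw [h1.det_eq_prod_eigenvalues]
  norm_cast
  calc (1:ℝ) = ∏ _i : Fin r, 1 := by simp
  _ ≤ ∏ i, h1.eigenvalues i := Finset.prod_le_prod (by simp) (fun i _ => key i)

/-- Monotonicity of the determinant under PSD perturbation of a PD matrix. -/
lemma det_re_mono {r : ℕ} {X D : Matrix (Fin r) (Fin r) ℂ}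
    (hX : X.PosDef) (hD : D.PosSemidef) : X.det.re ≤ (X + D).det.re := by
  obtain ⟨S, hS, hSS⟩ : ∃ S : Matrix (Fin r) (Fin r) ℂ, S.PosSemidef ∧ S * S = X := by
    open scoped MatrixOrder in
    exact ⟨CFC.sqrt X, (CFC.sqrt_nonneg X).posSemidef, CFC.sqrt_mul_sqrt_self X hX.posSemidef.nonneg⟩
  have hdetX : (0:ℂ) < X.det := hX.det_pos
  have hdetXne : X.det ≠ 0 := ne_of_gt hdetX
  have hdetS : IsUnit S.det := by
    apply isUnit_iff_ne_zero.2
    intro h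
    apply hdetXne
    rw [← hSS, Matrix.det_mul, h, mul_zero]
  have h1 : S * S⁻¹ = 1 := Matrix.mul_nonsing_inv S hdetS
  have h2 : S⁻¹ * S = 1 := Matrix.nonsing_inv_mul S hdetS
  have hSinvH : (S⁻¹)ᴴ = S⁻¹ := by
    rw [Matrix.conjTranspose_nonsing_inv, hS.1]
  have hM : (S⁻¹ * D * S⁻¹).PosSemidef := by
    have := hD.conjTranspose_mul_mul_same (B := S⁻¹)
    rwa [hSinvH] at this
  have hfact : X + D = S * (1 + S⁻¹ * D * S⁻¹) * S := by
    rw [Matrix.mul_add, Matrix.mul_one, Matrix.add_mul, hSS]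
    congr 1
    symm
    calc S * (S⁻¹ * D * S⁻¹) * S = (S * S⁻¹) * D * (S⁻¹ * S) := by
          simp only [Matrix.mul_assoc]
    _ = D := by rw [h1, h2, Matrix.one_mul, Matrix.mul_one]
  have hdet : (X + D).det = X.det * (1 + S⁻¹ * D * S⁻¹).det := by
    rw [hfact, Matrix.det_mul, Matrix.det_mul, ← hSS, Matrix.det_mul]
    ring
  have hXre : X.det = (X.det.re : ℂ) := herm_det_ofReal hX.1
  have hMre : (1 + S⁻¹ * D * S⁻¹).det = (((1 + S⁻¹ * D * S⁻¹).det.re : ℝ) : ℂ) :=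
    herm_det_ofReal (Matrix.isHermitian_one.add hM.1)
  have hge : 1 ≤ (1 + S⁻¹ * D * S⁻¹).det.re := one_le_det_re hM
  have hXpos : 0 ≤ X.det.re := by
    have := (Complex.lt_def.mp hdetX).1
    simpa using this.le
  rw [hdet, hXre, hMre, ← Complex.ofReal_mul, Complex.ofReal_re, Complex.ofReal_re]
  nlinarith

/-- A nonnegative real multiple of a PSD matrix is PSD. -/
lemma smul_posSemidef {r : ℕ} {M : Matrix (Fin r) (Fin r) ℂ} (hM : M.PosSemidef)
    {c : ℝ} (hc : 0 ≤ c) : ((c : ℂ) • M).PosSemidef := by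
  refine PosSemidef.of_dotProduct_mulVec_nonneg ?_ ?_
  · rw [Matrix.IsHermitian, Matrix.conjTranspose_smul, hM.1]
    simp
  · intro x
    rw [Matrix.smul_mulVec, dotProduct_smul]
    have h0 : (0:ℂ) ≤ (c : ℂ) := by
      rw [Complex.le_def]; simp [hc]
    exact mul_nonneg h0 (hM.dotProduct_mulVec_nonneg x)

/-- An operator-norm bound on a Hermitian matrix gives Loewner bounds `-ε•1 ≤ E ≤ ε•1`. -/
lemma norm_to_loewner {r : ℕ} {E : Matrix (Fin r) (Fin r) ℂ} (hE : E.IsHermitian)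
    {ε : ℝ}
    (hnorm : ‖(Matrix.toEuclideanLin E).toContinuousLinearMap‖ ≤ ε) :
    ((ε : ℂ) • 1 - E).PosSemidef ∧ ((ε : ℂ) • 1 + E).PosSemidef := by
  set T := (Matrix.toEuclideanLin E).toContinuousLinearMap with hT
  have herm1 : ((ε : ℂ) • (1 : Matrix (Fin r) (Fin r) ℂ)).IsHermitian := by
    rw [Matrix.IsHermitian, Matrix.conjTranspose_smul, Matrix.conjTranspose_one]
    simp
  have key : ∀ x : Fin r → ℂ,
      (dotProduct (star x) (E *ᵥ x)).im = 0 ∧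
      |(dotProduct (star x) (E *ᵥ x)).re| ≤
        ε * (dotProduct (star x) x).re := by
    intro x
    set y : EuclideanSpace ℂ (Fin r) := (WithLp.equiv 2 _).symm x with hy
    have h1 : (inner ℂ y (T y) : ℂ) = dotProduct (star x) (E *ᵥ x) := by rw [EuclideanSpace.inner_eq_star_dotProduct, dotProduct_comm]; rfl
    have h2 : (inner ℂ y y : ℂ) = dotProduct (star x) x := by rw [EuclideanSpace.inner_eq_star_dotProduct, dotProduct_comm]; rfl
    have him : (inner ℂ y (T y) : ℂ).im = 0 := by
      have hre : (starRingEnd ℂ) (inner ℂ y (T y) : ℂ) = inner ℂ y (T y) := by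
        have hsymm : (Matrix.toEuclideanLin E).IsSymmetric :=
          Matrix.isHermitian_iff_isSymmetric.mp hE
        rw [inner_conj_symm]
        exact hsymm y y
      have := congrArg Complex.im hre
      simp only [Complex.conj_im] at this
      linarith
    have habs : ‖(inner ℂ y (T y) : ℂ)‖ ≤ ε * ((inner ℂ y y : ℂ)).re := by
      calc ‖(inner ℂ y (T y) : ℂ)‖ = ‖(inner ℂ y (T y) : ℂ)‖ := rfl
      _ ≤ ‖y‖ * ‖T y‖ := norm_inner_le_norm _ _
      _ ≤ ‖y‖ * (‖T‖ * ‖y‖) := by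
          gcongr
          exact T.le_opNorm y
      _ ≤ ‖y‖ * (ε * ‖y‖) := by
          have h0 : (0:ℝ) ≤ ‖y‖ := norm_nonneg _
          gcongr
      _ = ε * (‖y‖ ^ 2) := by ring
      _ = ε * ((inner ℂ y y : ℂ)).re := by
          rw [← inner_self_eq_norm_sq (𝕜 := ℂ) y]; rfl
    constructor
    · rw [← h1]; exact him
    · rw [← h1, ← h2]
      exact (Complex.abs_re_le_norm _).trans habs
  have hdot : ∀ x : Fin r → ℂ,
      dotProduct (star x) (((ε : ℂ) • (1 : Matrix (Fin r) (Fin r) ℂ)) *ᵥ x)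
        = (ε : ℂ) * dotProduct (star x) x := by
    intro x
    rw [Matrix.smul_mulVec, Matrix.one_mulVec, dotProduct_smul]
    rfl
  have himxx : ∀ x : Fin r → ℂ, (dotProduct (star x) x).im = 0 ∧
      0 ≤ (dotProduct (star x) x).re := by
    intro x
    have h : (0:ℂ) ≤ dotProduct (star x) x := dotProduct_star_self_nonneg x
    rw [Complex.le_def] at h
    exact ⟨h.2.symm, h.1⟩
  constructor
  · refine PosSemidef.of_dotProduct_mulVec_nonneg (herm1.sub hE) (fun x => ?_)
    rw [Matrix.sub_mulVec, dotProduct_sub, hdot]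
    obtain ⟨him, hre⟩ := key x
    obtain ⟨hxxim, hxxre⟩ := himxx x
    rw [Complex.le_def]
    constructor
    · simp only [Complex.sub_re, Complex.mul_re, Complex.ofReal_re, Complex.ofReal_im,
        Complex.zero_re, hxxim]
      have := abs_le.mp hre
      nlinarith [this.2]
    · simp [Complex.sub_im, Complex.mul_im, hxxim, him]
  · refine PosSemidef.of_dotProduct_mulVec_nonneg (herm1.add hE) (fun x => ?_)
    rw [Matrix.add_mulVec, dotProduct_add, hdot]
    obtain ⟨him, hre⟩ := key x
    obtain ⟨hxxim, hxxre⟩ := himxx x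
    rw [Complex.le_def]
    constructor
    · simp only [Complex.add_re, Complex.mul_re, Complex.ofReal_re, Complex.ofReal_im,
        Complex.zero_re, hxxim]
      have := abs_le.mp hre
      nlinarith [this.1]
    · simp [Complex.add_im, Complex.mul_im, hxxim, him]

/-- Continuity of log-det capacity under CSI perturbation: if `A` is PSD,
`E` is Hermitian with operator norm at most `ε`, and `A + E` is PSD, then
`|log det (I + A + E) − log det (I + A)| ≤ r·log (1 + ε)`. -/
theorem logdet_perturbation_bound (r : ℕ)
    (A E : Matrix (Fin r) (Fin r) ℂ) (hA : A.PosSemidef)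
    (hE : E.IsHermitian) (hAE : (A + E).PosSemidef)
    (ε : ℝ) (hε : 0 ≤ ε)
    (hnorm : ‖(Matrix.toEuclideanLin E).toContinuousLinearMap‖ ≤ ε) :
    |Real.log ((1 + A + E).det.re) - Real.log ((1 + A).det.re)| ≤
      r * Real.log (1 + ε) := by
  obtain ⟨hP1, hP2⟩ := norm_to_loewner hE hnorm
  have hB : (1 + A).PosDef := Matrix.PosDef.one.add_posSemidef hA
  have hC : (1 + A + E).PosDef := by
    rw [add_assoc]; exact Matrix.PosDef.one.add_posSemidef hAE
  have hεA : ((ε : ℂ) • A).PosSemidef := smul_posSemidef hA hε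
  have hεAE : ((ε : ℂ) • (A + E)).PosSemidef := smul_posSemidef hAE hε
  -- abbreviations for the real determinants
  set b := (1 + A).det.re with hbdef
  set c := (1 + A + E).det.re with hcdef
  have hBdet : (1 + A).det = (b : ℂ) := herm_det_ofReal hB.1
  have hCdet : (1 + A + E).det = (c : ℂ) := herm_det_ofReal hC.1
  have hbpos : 0 < b := by
    have := (Complex.lt_def.mp hB.det_pos).1
    simpa using this
  have hcpos : 0 < c := by
    have := (Complex.lt_def.mp hC.det_pos).1
    simpa using this
  -- first inequality : c ≤ (1+ε)^r * b
  have hD1 : (((1:ℂ) + (ε:ℂ)) • (1 + A) - (1 + A + E)).PosSemidef := by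
    have heq : ((1:ℂ) + (ε:ℂ)) • ((1 : Matrix (Fin r) (Fin r) ℂ) + A) - (1 + A + E)
        = ((ε : ℂ) • 1 - E) + (ε : ℂ) • A := by module
    rw [heq]
    exact hP1.add hεA
  have hkey1 : c ≤ (1 + ε) ^ r * b := by
    have h := det_re_mono hC hD1
    have heq2 : (1 + A + E) + (((1:ℂ) + (ε:ℂ)) • (1 + A) - (1 + A + E))
        = ((1:ℂ) + (ε:ℂ)) • ((1 : Matrix (Fin r) (Fin r) ℂ) + A) := by module
    rw [heq2] at h
    have hsm : ((((1:ℂ) + (ε:ℂ)) • ((1 : Matrix (Fin r) (Fin r) ℂ) + A)).det).re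
        = (1 + ε) ^ r * b := by
      rw [Matrix.det_smul, Fintype.card_fin, hBdet]
      have : ((1:ℂ) + (ε:ℂ)) ^ r * (b : ℂ) = (((1 + ε) ^ r * b : ℝ) : ℂ) := by
        push_cast; ring
      rw [this, Complex.ofReal_re]
    rw [hsm] at h
    exact h
  -- second inequality : b ≤ (1+ε)^r * c
  have hD2 : (((1:ℂ) + (ε:ℂ)) • (1 + A + E) - (1 + A)).PosSemidef := by
    have heq : ((1:ℂ) + (ε:ℂ)) • ((1 : Matrix (Fin r) (Fin r) ℂ) + A + E) - (1 + A)
        = ((ε : ℂ) • 1 + E) + (ε : ℂ) • (A + E) := by module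
    rw [heq]
    exact hP2.add hεAE
  have hkey2 : b ≤ (1 + ε) ^ r * c := by
    have h := det_re_mono hB hD2
    have heq2 : (1 + A) + (((1:ℂ) + (ε:ℂ)) • (1 + A + E) - (1 + A))
        = ((1:ℂ) + (ε:ℂ)) • ((1 : Matrix (Fin r) (Fin r) ℂ) + A + E) := by module
    rw [heq2] at h
    have hsm : ((((1:ℂ) + (ε:ℂ)) • ((1 : Matrix (Fin r) (Fin r) ℂ) + A + E)).det).re
        = (1 + ε) ^ r * c := by
      rw [Matrix.det_smul, Fintype.card_fin, hCdet]
      have : ((1:ℂ) + (ε:ℂ)) ^ r * (c : ℂ) = (((1 + ε) ^ r * c : ℝ) : ℂ) := by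
        push_cast; ring
      rw [this, Complex.ofReal_re]
    rw [hsm] at h
    exact h
  -- conclude via logarithms
  have h1ε : (0:ℝ) < 1 + ε := by linarith
  have hpow : (0:ℝ) < (1 + ε) ^ r := pow_pos h1ε r
  have hlogmul1 : Real.log ((1 + ε) ^ r * b) = r * Real.log (1 + ε) + Real.log b := by
    rw [Real.log_mul (ne_of_gt hpow) (ne_of_gt hbpos), Real.log_pow]
  have hlogmul2 : Real.log ((1 + ε) ^ r * c) = r * Real.log (1 + ε) + Real.log c := by
    rw [Real.log_mul (ne_of_gt hpow) (ne_of_gt hcpos), Real.log_pow]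
  rw [abs_sub_le_iff]
  constructor
  · have := Real.log_le_log hcpos hkey1
    rw [hlogmul1] at this
    linarith
  · have := Real.log_le_log hbpos hkey2
    rw [hlogmul2] at this
    linarith
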